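/- Let p be a symplectic partition of 2n and p^G its Sp-expansion. Then p^G dominates p in the dominance order on partitions: for every k, the sum of the k largest parts of p^G is at least the sum of the k largest parts of p. -/

import Mathlib

/-- A symplectic partition of `m`: a non-increasing list of positive integers summing to `m`
in which every odd part occurs with even multiplicity. -/
def IsSymplecticPartition (l : List ℕ) (m : ℕ) : Prop :=
  l.Pairwise (· ≥ ·) ∧ (∀ a ∈ l, 0 < a) ∧ (∀ a : ℕ, Odd a → Even (l.count a)) ∧ l.sum = m

/-- The number of even parts of `l` (with multiplicity) that are greater than `d`. -/
def evenAbove (l : List ℕ) (d : ℕ) : ℕ :=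
  l.countP (fun a => decide (Even a ∧ d < a))

/-- A symplectic partition is special if the number of even parts greater than
any odd part is even. -/
def SpecialP (l : List ℕ) : Prop :=
  ∀ d ∈ l, Odd d → Even (evenAbove l d)

/-- `j` (0-based) is the head of a replaced pair: in 1-based indexing this is an index `2i`
with `p_{2i} = p_{2i+1}` odd and `p_{2i-1} ≠ p_{2i}`. -/
def replacedHead (l : List ℕ) (j : ℕ) : Bool :=
  decide (j % 2 = 1) && decide (j + 1 < l.length) &&
  decide (l.getD j 0 = l.getD (j + 1) 0) && decide (Odd (l.getD j 0)) &&
  decide (l.getD (j - 1) 0 ≠ l.getD j 0)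

/-- The raw Sp-expansion: each replaced pair `(p, p)` becomes `(p+1, p-1)`. -/
def spExpansion (l : List ℕ) : List ℕ :=
  List.ofFn (fun j : Fin l.length =>
    if replacedHead l (j : ℕ) then l.getD (j : ℕ) 0 + 1
    else if replacedHead l ((j : ℕ) - 1) then l.getD (j : ℕ) 0 - 1
    else l.getD (j : ℕ) 0)

/-- The Sp-expansion `p^G` of a symplectic partition, with zero parts removed. -/
def spExpand (l : List ℕ) : List ℕ := (spExpansion l).filter (· != 0)

/-- The sum of the `k` largest parts of `l`. -/
def largestSum (l : List ℕ) (k : ℕ) : ℕ :=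
  ((((l : Multiset ℕ).sort (· ≤ ·)).reverse).take k).sum

/-- Dominance order on partitions: `Dominates a b` means `a ≥ b`. -/
def Dominates (a b : List ℕ) : Prop := ∀ k : ℕ, largestSum b k ≤ largestSum a k


private lemma take_sum_succ' (t : List ℕ) (k : ℕ) :
    (t.take (k+1)).sum = (t.take k).sum + t.getD k 0 := by
  rw [List.take_succ, List.sum_append, List.getD_eq_getElem?_getD]
  cases t[k]? <;> simp

private lemma replacedHead_iff' {l : List ℕ} {j : ℕ} :
    replacedHead l j = true ↔ j % 2 = 1 ∧ j + 1 < l.length ∧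
      l.getD j 0 = l.getD (j+1) 0 ∧ Odd (l.getD j 0) ∧ l.getD (j-1) 0 ≠ l.getD j 0 := by
  simp [replacedHead, and_assoc]

private lemma replacedHead_zero' (l : List ℕ) : replacedHead l 0 = false := by
  simp [replacedHead]

private lemma spExpansion_getD' (l : List ℕ) (k : ℕ) :
    (spExpansion l).getD k 0 =
      if k < l.length then
        (if replacedHead l k then l.getD k 0 + 1
         else if replacedHead l (k-1) then l.getD k 0 - 1
         else l.getD k 0)
      else 0 := by
  rw [List.getD_eq_getElem?_getD, spExpansion, List.getElem?_ofFn]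
  split <;> simp_all

private lemma spExpand_inv' (l : List ℕ) (k : ℕ) :
    (l.take k).sum + (if replacedHead l (k-1) then 1 else 0)
      ≤ ((spExpansion l).take k).sum := by
  induction k with
  | zero => simp [replacedHead_zero' l]
  | succ k ih =>
    have hT : (l.take k).sum ≤ ((spExpansion l).take k).sum :=
      le_trans (Nat.le_add_right _ _) ih
    rw [take_sum_succ', take_sum_succ', spExpansion_getD']
    have hk1 : (k+1) - 1 = k := rfl
    rw [hk1]
    by_cases h1 : replacedHead l k
    · have h1' := replacedHead_iff'.mp h1
      have hlen : k < l.length := by omega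
      rw [if_pos hlen, if_pos h1, if_pos h1]
      omega
    · by_cases h2 : replacedHead l (k-1)
      · have h2' := replacedHead_iff'.mp h2
        have hk : 1 ≤ k := by
          rcases Nat.eq_zero_or_pos k with rfl | hp
        -- k = 0 : replacedHead l (0-1) = replacedHead l 0 = false
          · exact absurd h2 (by simp [replacedHead_zero' l])
          · exact hp
        have hkk : k - 1 + 1 = k := by omega
        have hlen : k < l.length := by omega
        have hval : l.getD (k-1) 0 = l.getD k 0 := by rw [← hkk]; exact h2'.2.2.1
        have hodd : l.getD k 0 % 2 = 1 := by
          have := h2'.2.2.2.1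
          rw [hval] at this
          exact Nat.odd_iff.mp this
        rw [if_pos hlen, if_neg h1, if_pos h2, if_neg h1]
        rw [if_pos h2] at ih
        omega
      · rw [if_neg h1]
        rcases lt_or_ge k l.length with hlt | hge
        · rw [if_pos hlt, if_neg h1, if_neg h2]; omega
        · rw [if_neg (Nat.not_lt.mpr hge), List.getD_eq_default _ _ hge]
          omega

private lemma sum_filter_bne' (t : List ℕ) : (t.filter (· != 0)).sum = t.sum := by
  induction t with
  | nil => rfl
  | cons a t ih => by_cases h : a = 0 <;> simp [List.filter_cons, h, ih]

private lemma sublist_sum_le' : ∀ {t r : List ℕ}, t.Sublist r → t.sum ≤ r.sum := by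
  intro t r h
  induction h with
  | slnil => simp
  | cons a h ih => simpa using le_trans ih (Nat.le_add_left _ _)
  | cons_cons a h ih => simpa using ih

private lemma take_succ_le_add' (a : ℕ) : ∀ (r : List ℕ) (m : ℕ), (∀ x ∈ r, x ≤ a) →
    (r.take (m+1)).sum ≤ a + (r.take m).sum := by
  intro r
  induction r with
  | nil => simp
  | cons b r ih =>
    intro m ha
    cases m with
    | zero => simpa using ha b (by simp)
    | succ m =>
      simp only [List.take_succ_cons, List.sum_cons]
      have := ih m (fun x hx => ha x (by simp [hx]))
      omega

private lemma sum_le_take_of_sublist' : ∀ {t r : List ℕ}, t.Sublist r → r.Pairwise (· ≥ ·) →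
    t.sum ≤ (r.take t.length).sum := by
  intro t r h
  induction h with
  | slnil => simp
  | @cons t r a h ih =>
    intro hs
    have h1 := ih hs.of_cons
    cases ht : t.length with
    | zero => rw [List.length_eq_zero_iff] at ht; simp [ht]
    | succ m =>
      rw [ht] at h1
      have h2 := take_succ_le_add' a r m (fun x hx => List.rel_of_pairwise_cons hs hx)
      simp only [List.take_succ_cons, List.sum_cons]
      omega
  | @cons_cons t r a h ih =>
    intro hs
    simp only [List.length_cons, List.take_succ_cons, List.sum_cons]
    exact Nat.add_le_add_left (ih hs.of_cons) a

private lemma take_sum_mono' (r : List ℕ) {j k : ℕ} (h : j ≤ k) :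
    (r.take j).sum ≤ (r.take k).sum := by
  have : r.take j = (r.take k).take j := by rw [List.take_take, Nat.min_eq_left h]
  rw [this]
  exact sublist_sum_le' (List.take_sublist _ _)

private lemma sum_le_largestSum' {s : Multiset ℕ} {m : List ℕ} (hs : s ≤ (m : Multiset ℕ))
    {k : ℕ} (hc : Multiset.card s ≤ k) : s.sum ≤ largestSum m k := by
  classical
  set r : List ℕ := (((m : Multiset ℕ)).sort (· ≤ ·)).reverse with hr
  have hrs : r.Pairwise (· ≥ ·) := by
    rw [List.pairwise_reverse]
    exact Multiset.pairwise_sort _ (· ≤ ·)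
  set t : List ℕ := (s.sort (· ≤ ·)).reverse with htdef
  have hts : (↑t : Multiset ℕ) = s := by
    rw [htdef, Multiset.coe_reverse, Multiset.sort_eq]
  have htsorted : t.Pairwise (· ≥ ·) := by
    rw [List.pairwise_reverse]
    exact Multiset.pairwise_sort _ (· ≤ ·)
  have hsub : t.Sublist r := by
    apply List.sublist_of_subperm_of_pairwise _ htsorted hrs
    rw [← Multiset.coe_le, hts, hr, Multiset.coe_reverse, Multiset.sort_eq]
    exact hs
  have hlen : t.length ≤ k := by
    rw [← Multiset.coe_card, hts] at *; exact hc
  calc s.sum = t.sum := by rw [← hts]; simp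
    _ ≤ (r.take t.length).sum := sum_le_take_of_sublist' hsub hrs
    _ ≤ (r.take k).sum := take_sum_mono' r hlen
    _ = largestSum m k := rfl

private lemma largestSum_of_sorted' {l : List ℕ} (hl : l.Pairwise (· ≥ ·)) (k : ℕ) :
    largestSum l k = (l.take k).sum := by
  have hrev : ((l : Multiset ℕ)).sort (· ≤ ·) = l.reverse := by
    refine (fun hp h1 h2 => List.Perm.eq_of_pairwise' (r := (· ≤ ·)) h1 h2 hp) ?_ ?_ ?_
    · rw [← Multiset.coe_eq_coe, Multiset.sort_eq, Multiset.coe_reverse]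
    · exact Multiset.pairwise_sort _ _
    · rw [List.pairwise_reverse]; exact hl
  rw [largestSum, hrev, List.reverse_reverse]

/-- The Sp-expansion dominates the original partition in the dominance order:
for every `k`, the sum of the `k` largest parts of `p^G` is at least that of `p`. -/
theorem spExpand_dominates (n : ℕ) (l : List ℕ)
    (h : IsSymplecticPartition l (2 * n)) :
    Dominates (spExpand l) l := by
  intro k
  rw [largestSum_of_sorted' h.1 k]
  set s : Multiset ℕ := ↑(((spExpansion l).take k).filter (· != 0)) with hsdef
  have hs : s ≤ ((spExpand l : List ℕ) : Multiset ℕ) := by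
    rw [Multiset.coe_le]
    exact (List.Sublist.filter _ (List.take_sublist _ _)).subperm
  have hc : Multiset.card s ≤ k := by
    rw [hsdef, Multiset.coe_card]
    exact le_trans (List.length_filter_le _ _) (by simp [List.length_take])
  have hsum : (l.take k).sum ≤ s.sum := by
    rw [hsdef]
    show (l.take k).sum ≤ (List.sum _)
    rw [sum_filter_bne']
    exact le_trans (Nat.le_add_right _ _) (spExpand_inv' l k)
  exact le_trans hsum (sum_le_largestSum' hs hc)
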